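/- Let q, a, b, c, d ∈ ℂ with q ∉ {0, 1, -1, i, -i}, and define φ(z) = (1-az)(1-bz)(1-cz)(1-dz) / ((1-z²)(1-q²z²)) for z ∉ {0, ±1, ±q⁻¹}. Then there exists a constant A ∈ ℂ such that for all z with z, z⁻¹ ∉ {±1, ±q⁻¹}: φ(z)·(q²z + q⁻²z⁻¹ - z - z⁻¹) + φ(z⁻¹)·(q⁻²z + q²z⁻¹ - z - z⁻¹) = (q⁻²-1)(1 - abcd)·(z + z⁻¹) + A. -/

import Mathlib

/-- The coefficient function of the Askey–Wilson q-difference operator. -/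
noncomputable def phiAW (q a b c d w : ℂ) : ℂ :=
  (1 - a * w) * (1 - b * w) * (1 - c * w) * (1 - d * w)
    / ((1 - w ^ 2) * (1 - q ^ 2 * w ^ 2))

set_option maxHeartbeats 1600000 in
/-- The Askey–Wilson operator acts on z + z⁻¹ with eigenvalue
(q⁻²-1)(1-abcd) up to an additive constant. -/
theorem stmt16 (q a b c d : ℂ) (hq0 : q ≠ 0) (hq1 : q ≠ 1) (hqm1 : q ≠ -1)
    (hqi : q ≠ Complex.I) (hqmi : q ≠ -Complex.I) :
    ∃ A : ℂ, ∀ z : ℂ, z ≠ 0 → z ≠ 1 → z ≠ -1 → z ≠ q⁻¹ → z ≠ -q⁻¹ →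
      z ≠ q → z ≠ -q →
      phiAW q a b c d z * (q ^ 2 * z + (q ^ 2)⁻¹ * z⁻¹ - z - z⁻¹)
        + phiAW q a b c d z⁻¹ * ((q ^ 2)⁻¹ * z + q ^ 2 * z⁻¹ - z - z⁻¹)
      = ((q ^ 2)⁻¹ - 1) * (1 - a * b * c * d) * (z + z⁻¹) + A := by
  refine ⟨(1 - (q ^ 2)⁻¹) * ((a + b + c + d) - (a*b*c + a*b*d + a*c*d + b*c*d)), ?_⟩
  intro z hz0 hz1 hzm1 hzq1 hzq2 hzq3 hzq4
  have h1 : (1 : ℂ) - z ^ 2 ≠ 0 := by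
    intro h
    have : (z - 1) * (z + 1) = 0 := by linear_combination -h
    rcases mul_eq_zero.mp this with h' | h'
    · exact hz1 (by linear_combination h')
    · exact hzm1 (by linear_combination h')
  have h2 : (1 : ℂ) - q ^ 2 * z ^ 2 ≠ 0 := by
    intro h
    have : (q * z - 1) * (q * z + 1) = 0 := by linear_combination -h
    rcases mul_eq_zero.mp this with h' | h'
    · exact hzq1 (eq_inv_of_mul_eq_one_left (by linear_combination h'))
    · have hm : z * -q = 1 := by linear_combination -h'
      exact hzq2 (by rw [neg_inv]; exact eq_inv_of_mul_eq_one_left hm)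
  have h3 : (z : ℂ) ^ 2 - q ^ 2 ≠ 0 := by
    intro h
    have : (z - q) * (z + q) = 0 := by linear_combination h
    rcases mul_eq_zero.mp this with h' | h'
    · exact hzq3 (by linear_combination h')
    · exact hzq4 (by linear_combination h')
  have h1' : (z : ℂ) ^ 2 - 1 ≠ 0 := by
    intro h; exact h1 (by linear_combination -h)
  have hq2 : (q : ℂ) ^ 2 ≠ 0 := pow_ne_zero 2 hq0
  have hD1 : ((1 : ℂ) - z ^ 2) * (1 - q ^ 2 * z ^ 2) ≠ 0 := mul_ne_zero h1 h2
  have hD2 : ((z : ℂ) ^ 2 - 1) * (z ^ 2 - q ^ 2) ≠ 0 := mul_ne_zero h1' h3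
  have hden1 : z * q ^ 2 * ((1 - z ^ 2) * (1 - q ^ 2 * z ^ 2)) ≠ 0 :=
    mul_ne_zero (mul_ne_zero hz0 hq2) hD1
  have hden2 : z * q ^ 2 * ((z ^ 2 - 1) * (z ^ 2 - q ^ 2)) ≠ 0 :=
    mul_ne_zero (mul_ne_zero hz0 hq2) hD2
  have hphi_inv : phiAW q a b c d z⁻¹
      = (z - a) * (z - b) * (z - c) * (z - d) / ((z ^ 2 - 1) * (z ^ 2 - q ^ 2)) := by
    unfold phiAW
    rw [div_eq_div_iff (by
      intro h
      have hz4 : (z : ℂ) ^ 4 ≠ 0 := pow_ne_zero 4 hz0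
      apply hD2
      have h' : ((1 : ℂ) - z⁻¹ ^ 2) * (1 - q ^ 2 * z⁻¹ ^ 2) * z ^ 4
          = (z ^ 2 - 1) * (z ^ 2 - q ^ 2) := by
        field_simp
      rw [← h', h, zero_mul]) hD2]
    field_simp
    try ring
    try exact Or.inl trivial
  have e1 : phiAW q a b c d z * (q ^ 2 * z + (q ^ 2)⁻¹ * z⁻¹ - z - z⁻¹)
      = ((1 - a * z) * (1 - b * z) * (1 - c * z) * (1 - d * z)
          * (q ^ 4 * z ^ 2 + 1 - q ^ 2 * z ^ 2 - q ^ 2))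
        / (z * q ^ 2 * ((1 - z ^ 2) * (1 - q ^ 2 * z ^ 2))) := by
    unfold phiAW
    rw [div_mul_eq_mul_div, div_eq_div_iff hD1 hden1]
    field_simp
  have e2 : phiAW q a b c d z⁻¹ * ((q ^ 2)⁻¹ * z + q ^ 2 * z⁻¹ - z - z⁻¹)
      = ((z - a) * (z - b) * (z - c) * (z - d)
          * (z ^ 2 + q ^ 4 - q ^ 2 * z ^ 2 - q ^ 2))
        / (z * q ^ 2 * ((z ^ 2 - 1) * (z ^ 2 - q ^ 2))) := by
    rw [hphi_inv, div_mul_eq_mul_div, div_eq_div_iff hD2 hden2]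
    field_simp
  rw [e1, e2, div_add_div _ _ hden1 hden2, div_eq_iff (mul_ne_zero hden1 hden2)]
  field_simp
  ring
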